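/- Fix n ∈ {1,…,N}, nonnegative data x_1,…,x_T ∈ ℝ^L, coefficients a_{jt} ∈ ℝ, and vectors e_j ∈ ℝ^L for j ≠ n. Define J(e) = (1/2)∑_{t=1}^T ‖x_t x_tᵀ − a_{nt}·e eᵀ − ∑_{j≠n} a_{jt}·e_j e_jᵀ‖²_F for e ∈ ℝ^L. Then for each coordinate k ∈ {1,…,L}, the second partial derivative ∂²J/∂e_k² evaluated at e = 0 equals 2·∑_{t=1}^T a_{nt}( ∑_{j≠n} a_{jt} e_{jk}² − x_{kt}² ), where x_{kt} and e_{jk} denote the k-th entries of x_t and e_j. -/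

import Mathlib

open Finset

attribute [local instance] Matrix.frobeniusNormedAddCommGroup

lemma frob_normsq {L : ℕ} (A : Matrix (Fin L) (Fin L) ℝ) :
    ‖A‖^2 = ∑ i, ∑ j, (A i j)^2 := by
  rw [Matrix.frobenius_norm_def, ← Real.rpow_natCast _ 2,
    ← Real.rpow_mul (by positivity)]
  norm_num

lemma key_sum {L : ℕ} (C : Matrix (Fin L) (Fin L) ℝ) (a s : ℝ) (k : Fin L) :
    ∑ i, ∑ j, (C i j - a * ((Pi.single k s : Fin L → ℝ) i
        * (Pi.single k s : Fin L → ℝ) j))^2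
      = (∑ i, ∑ j, (C i j)^2) - 2*a*(C k k)*s^2 + a^2*s^4 := by
  have h1 : ∀ i j, (C i j - a * ((Pi.single k s : Fin L → ℝ) i
        * (Pi.single k s : Fin L → ℝ) j))^2
      = (C i j)^2 + (if i = k then (if j = k then
          ((C k k - a*s^2)^2 - (C k k)^2) else 0) else 0) := by
    intro i j
    by_cases hi : i = k <;> by_cases hj : j = k <;>
      simp [hi, hj, Pi.single_apply] <;> (try ring)
  have h2 : ∑ i : Fin L, ∑ j : Fin L, (if i = k then (if j = k then
      ((C k k - a*s^2)^2 - (C k k)^2) else 0) else 0)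
      = (C k k - a*s^2)^2 - (C k k)^2 := by simp
  simp only [h1, Finset.sum_add_distrib, h2]
  ring

/-- For the quadratic polynomial kernel (feature map `Φ(u) = u uᵀ`), the second
partial derivative `∂²J/∂e_k²` of the kernel-NMF cost in the endmember `e = e_n`,
evaluated at `e = 0`, equals `2 ∑_t a_{nt}(∑_{j≠n} a_{jt} e_{jk}² − x_{kt}²)`. -/
theorem kernelNMF_quadratic_second_partial_at_zero
    {L N T : ℕ} (n : Fin N)
    (x : Fin T → Fin L → ℝ) (hx : ∀ t i, 0 ≤ x t i)
    (a : Fin N → Fin T → ℝ)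
    (e : Fin N → Fin L → ℝ)
    (k : Fin L) :
    iteratedDeriv 2
      (fun s : ℝ =>
        (1/2 : ℝ) * ∑ t, ‖Matrix.vecMulVec (x t) (x t)
            - a n t • Matrix.vecMulVec (Pi.single k s) (Pi.single k s)
            - ∑ j ∈ univ.erase n, a j t • Matrix.vecMulVec (e j) (e j)‖^2) 0
      = 2 * ∑ t, a n t * (∑ j ∈ univ.erase n, a j t * (e j k)^2 - (x t k)^2) := by
  set C : Fin T → Matrix (Fin L) (Fin L) ℝ := fun t =>
    Matrix.vecMulVec (x t) (x t) - ∑ j ∈ univ.erase n, a j t • Matrix.vecMulVec (e j) (e j)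
    with hC
  set K : ℝ := (1/2) * ∑ t, ∑ i, ∑ j, (C t i j)^2 with hK
  set B : ℝ := ∑ t, -(a n t) * (C t k k) with hB
  set D : ℝ := (1/2) * ∑ t, (a n t)^2 with hD
  have hfun : (fun s : ℝ =>
        (1/2 : ℝ) * ∑ t, ‖Matrix.vecMulVec (x t) (x t)
            - a n t • Matrix.vecMulVec (Pi.single k s) (Pi.single k s)
            - ∑ j ∈ univ.erase n, a j t • Matrix.vecMulVec (e j) (e j)‖^2)
      = fun s => K + (B*s^2 + D*s^4) := by
    funext s
    have hM : ∀ t, Matrix.vecMulVec (x t) (x t)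
            - a n t • Matrix.vecMulVec (Pi.single k s) (Pi.single k s)
            - ∑ j ∈ univ.erase n, a j t • Matrix.vecMulVec (e j) (e j)
        = Matrix.of (fun i j => C t i j - a n t * ((Pi.single k s : Fin L → ℝ) i
            * (Pi.single k s : Fin L → ℝ) j)) := by
      intro t
      funext i j
      simp only [hC, Matrix.sub_apply, Matrix.sum_apply, Matrix.smul_apply,
        Matrix.vecMulVec_apply, smul_eq_mul, Matrix.of_apply]
      ring
    simp_rw [hM]
    have hnorm : ∀ t, ‖(Matrix.of (fun i j => C t i j
            - a n t * ((Pi.single k s : Fin L → ℝ) i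
            * (Pi.single k s : Fin L → ℝ) j)) : Matrix (Fin L) (Fin L) ℝ)‖^2
        = (∑ i, ∑ j, (C t i j)^2) - 2*(a n t)*(C t k k)*s^2 + (a n t)^2*s^4 :=
      fun t => (frob_normsq _).trans (key_sum (C t) (a n t) s k)
    simp_rw [hnorm]
    have expand : K + (B*s^2 + D*s^4)
        = ∑ t, ((1/2)*(∑ i, ∑ j, (C t i j)^2)
            + ((-(a n t)*(C t k k))*s^2 + ((1/2)*(a n t)^2)*s^4)) := by
      rw [Finset.sum_add_distrib, Finset.sum_add_distrib, ← Finset.mul_sum,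
        ← Finset.sum_mul, ← Finset.sum_mul, ← Finset.mul_sum]
    rw [Finset.mul_sum, expand]
    exact Finset.sum_congr rfl fun t _ => by ring
  rw [hfun]
  have H1 : ∀ s : ℝ, HasDerivAt (fun s : ℝ => K + (B*s^2 + D*s^4))
      (2*B*s + 4*D*s^3) s := by
    intro s
    have h := (((hasDerivAt_pow 2 s).const_mul B).add
      ((hasDerivAt_pow 4 s).const_mul D)).const_add K
    refine h.congr_deriv ?_
    push_cast
    ring
  have hderiv : deriv (fun s : ℝ => K + (B*s^2 + D*s^4))
      = fun s => 2*B*s + 4*D*s^3 := funext fun s => (H1 s).deriv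
  have H2 : HasDerivAt (fun s : ℝ => 2*B*s + 4*D*s^3) (2*B) 0 := by
    have h := ((hasDerivAt_id (0:ℝ)).const_mul (2*B)).add
      ((hasDerivAt_pow 3 (0:ℝ)).const_mul (4*D))
    refine h.congr_deriv ?_
    push_cast
    ring
  rw [iteratedDeriv_succ, iteratedDeriv_one, hderiv, H2.deriv]
  rw [hB, Finset.mul_sum, Finset.mul_sum]
  apply Finset.sum_congr rfl
  intro t _
  simp only [hC, Matrix.sub_apply, Matrix.sum_apply, Matrix.smul_apply,
    Matrix.vecMulVec_apply, smul_eq_mul, pow_two]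
  ring
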